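/- Let N ≤ L, d ≤ N, and c > 0, and let N_G be a positive integer. For P > 1 set N_f = (N_G/2)·log₂ P and Δ = 2/(c·2^{N_f})^{1/N_G}. Let H ∈ ℂ^{N×L} be written H^H = F·C with F ∈ ℂ^{L×N} truncated unitary and C invertible; let F̂, Ũ, V be truncated unitary with Ũ^H F̂^H V = 0, G = C^{-1} F^H F̂ Ũ, Q_I = G^H H V V^H H^H G, and suppose the quantization error satisfies d_c²(F̂,F) ≤ Δ². Then for every Hermitian positive semidefinite Q_S ∈ ℂ^{d×d}, the rate loss satisfies R_p − R_q ≤ d·log(1 + 8/(c^{2/N_G}·d)), a bound independent of P, where R_p = log det(I_d + (P/d)Q_S) and R_q = log det(I_d + (P/d)(Q_S+Q_I)) − log det(I_d + (P/d)Q_I). -/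

import Mathlib

open Matrix
open scoped ComplexOrder

/-- Squared Frobenius norm of a complex matrix. -/
noncomputable def frobNormSq {m n : Type*} [Fintype m] [Fintype n]
    (A : Matrix m n ℂ) : ℝ :=
  ∑ i, ∑ j, ‖A i j‖ ^ 2

/-- Squared chordal distance: `d_c(X,Y)² = (1/2) ‖X Xᴴ − Y Yᴴ‖_F²`. -/
noncomputable def chordalDistSq {L N : ℕ} (X Y : Matrix (Fin L) (Fin N) ℂ) : ℝ :=
  (1 / 2) * frobNormSq (X * Xᴴ - Y * Yᴴ)

set_option maxHeartbeats 1000000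

-- T1: trace formula
lemma trace_conjTranspose_mul_self {m n : Type*} [Fintype m] [Fintype n] [DecidableEq n]
    (A : Matrix m n ℂ) : (Aᴴ * A).trace = (frobNormSq A : ℂ) := by
  simp only [Matrix.trace, Matrix.diag, Matrix.mul_apply, conjTranspose_apply, frobNormSq]
  push_cast
  rw [Finset.sum_comm]
  refine Finset.sum_congr rfl fun i _ => Finset.sum_congr rfl fun j _ => ?_
  rw [show ((‖A i j‖ : ℂ) ^ 2) = ((Complex.normSq (A i j) : ℝ) : ℂ) by
        rw [← Complex.sq_norm]; push_cast; ring,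
      Complex.normSq_eq_conj_mul_self]
  rfl

lemma frobNormSq_nonneg {m n : Type*} [Fintype m] [Fintype n] (A : Matrix m n ℂ) :
    0 ≤ frobNormSq A :=
  Finset.sum_nonneg fun _ _ => Finset.sum_nonneg fun _ _ => sq_nonneg _

lemma frobNormSq_conjTranspose {m n : Type*} [Fintype m] [Fintype n] (A : Matrix m n ℂ) :
    frobNormSq Aᴴ = frobNormSq A := by
  unfold frobNormSq
  rw [Finset.sum_comm]
  simp [conjTranspose_apply]

lemma frobNormSq_neg {m n : Type*} [Fintype m] [Fintype n] (A : Matrix m n ℂ) :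
    frobNormSq (-A) = frobNormSq A := by
  unfold frobNormSq; simp

lemma trace_key {m n q : Type*} [Fintype m] [Fintype n] [Fintype q]
    (B : Matrix m n ℂ) (Y : Matrix n q ℂ) :
    ((B * Y)ᴴ * (B * Y)).trace = ((Bᴴ * B) * (Y * Yᴴ)).trace := by
  rw [conjTranspose_mul, Matrix.trace_mul_cycle, Matrix.trace_mul_cycle,
    ← Matrix.mul_assoc Bᴴ B Y, Matrix.mul_assoc (Bᴴ * B) Y Yᴴ]

lemma frobNormSq_mul_right_le {m n p : Type*} [Fintype m] [Fintype n] [Fintype p]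
    [DecidableEq n] [DecidableEq p]
    (B : Matrix m n ℂ) (X : Matrix n p ℂ) (hX : Xᴴ * X = 1) :
    frobNormSq (B * X) ≤ frobNormSq B := by
  set S : Matrix n n ℂ := 1 - X * Xᴴ with hSdef
  have hS : Sᴴ = S := by
    simp [hSdef, conjTranspose_sub, conjTranspose_mul]
  have hSS : S * S = S := by
    have h2 : (X * Xᴴ) * (X * Xᴴ) = X * Xᴴ := by
      conv_lhs => rw [Matrix.mul_assoc, ← Matrix.mul_assoc Xᴴ X Xᴴ, hX, Matrix.one_mul]
    simp [hSdef, sub_mul, mul_sub, h2]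
  have split : (frobNormSq (B * X) : ℂ) + (frobNormSq (B * S) : ℂ) = (frobNormSq B : ℂ) := by
    rw [← trace_conjTranspose_mul_self, ← trace_conjTranspose_mul_self,
      ← trace_conjTranspose_mul_self, trace_key B X, trace_key B S, hS, hSS,
      ← Matrix.trace_add, ← mul_add]
    have : X * Xᴴ + S = 1 := by simp [hSdef]
    rw [this, mul_one]
  have hreal : frobNormSq (B * X) + frobNormSq (B * S) = frobNormSq B := by
    exact_mod_cast split
  linarith [frobNormSq_nonneg (B * S)]

lemma frobNormSq_mul_left_le {m n p : Type*} [Fintype m] [Fintype n] [Fintype p]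
    [DecidableEq m] [DecidableEq n]
    (X : Matrix n m ℂ) (B : Matrix n p ℂ) (hX : Xᴴ * X = 1) :
    frobNormSq (Xᴴ * B) ≤ frobNormSq B := by
  rw [← frobNormSq_conjTranspose (Xᴴ * B), conjTranspose_mul, conjTranspose_conjTranspose,
    ← frobNormSq_conjTranspose B]
  exact frobNormSq_mul_right_le Bᴴ X hX

lemma posSemidef_real_smul {k : Type*} [Fintype k] {A : Matrix k k ℂ}
    (hA : A.PosSemidef) {a : ℝ} (ha : 0 ≤ a) : ((a : ℂ) • A).PosSemidef := by
  constructor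
  · unfold Matrix.IsHermitian
    rw [conjTranspose_smul, hA.1.eq]
    congr 1
    simp [Complex.conj_ofReal]
  · exact (hA.smul (Complex.zero_le_real.mpr ha)).2

lemma det_one_add_real_smul {k : Type*} [Fintype k] [DecidableEq k] (r : ℝ)
    {A : Matrix k k ℂ} (hA : A.IsHermitian) :
    (1 + (r : ℂ) • A).det = ((∏ i, (1 + r * hA.eigenvalues i) : ℝ) : ℂ) := by
  set U : Matrix k k ℂ := (hA.eigenvectorUnitary : Matrix k k ℂ) with hUdef
  have hU : U * star U = 1 := mem_unitaryGroup_iff.mp hA.eigenvectorUnitary.2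
  set D : Matrix k k ℂ := diagonal (RCLike.ofReal ∘ hA.eigenvalues) with hDdef
  have key : 1 + (r : ℂ) • A = U * (1 + (r : ℂ) • D) * star U := by
    rw [Matrix.mul_add, Matrix.add_mul, Matrix.mul_one, hU, Matrix.mul_smul,
      Matrix.smul_mul, hA.spectral_theorem, Unitary.conjStarAlgAut_apply]
  rw [key, det_mul, det_mul]
  have hUdet : U.det * (star U).det = 1 := by
    rw [← det_mul, hU, det_one]
  have hdiag : (1 : Matrix k k ℂ) + (r : ℂ) • D =
      diagonal (fun i => (1 : ℂ) + r * hA.eigenvalues i) := by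
    rw [hDdef, ← Matrix.diagonal_one, ← Matrix.diagonal_smul, ← Matrix.diagonal_add]
    congr 1
  calc U.det * (1 + (r : ℂ) • D).det * (star U).det
      = (1 + (r : ℂ) • D).det * (U.det * (star U).det) := by ring
    _ = (1 + (r : ℂ) • D).det := by rw [hUdet, mul_one]
    _ = ∏ i, ((1 : ℂ) + r * hA.eigenvalues i) := by rw [hdiag, det_diagonal]
    _ = ((∏ i, (1 + r * hA.eigenvalues i) : ℝ) : ℂ) := by push_cast; ring_nf

lemma trace_eq_sum_eigenvalues' {k : Type*} [Fintype k] [DecidableEq k]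
    {A : Matrix k k ℂ} (hA : A.IsHermitian) :
    A.trace = ((∑ i, hA.eigenvalues i : ℝ) : ℂ) := by
  conv_lhs => rw [hA.spectral_theorem, Unitary.conjStarAlgAut_apply]
  rw [Matrix.trace_mul_cycle, mem_unitaryGroup_iff'.mp hA.eigenvectorUnitary.2,
    Matrix.one_mul, Matrix.trace_diagonal]
  push_cast
  rfl

open scoped MatrixOrder in
lemma exists_psd_sqrt {k : Type*} [Fintype k] [DecidableEq k] {W : Matrix k k ℂ}
    (hW : W.PosSemidef) : ∃ R : Matrix k k ℂ, R.PosSemidef ∧ R * R = W :=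
  ⟨CFC.sqrt W, (CFC.sqrt_nonneg W).posSemidef, CFC.sqrt_mul_sqrt_self W hW.nonneg⟩

/-- **Theorem 2 (quantitative core).**  With feedback bits scaled as
`N_f = (N_G/2) log₂ P`, packing radius `Δ = 2/(c 2^{N_f})^{1/N_G}`, and a
quantization error `d_c(F̂,F)² ≤ Δ²`, the rate loss `R_p − R_q` is bounded by
the constant `d log(1 + 8/(c^{2/N_G} d))`, independent of `P`. -/
theorem rate_loss_bounded_constant_with_scaled_feedback
    (N L d m : ℕ) (hNL : N ≤ L) (hdN : d ≤ N) (hd : 0 < d)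
    (N_G : ℕ) (hNG : 0 < N_G) (c : ℝ) (hc : 0 < c)
    (P : ℝ) (hP : 1 < P)
    (N_f : ℝ) (hNf : N_f = (N_G / 2 : ℝ) * Real.logb 2 P)
    (Δ : ℝ) (hΔ : Δ = 2 / (c * (2 : ℝ) ^ N_f) ^ (1 / (N_G : ℝ)))
    (H : Matrix (Fin N) (Fin L) ℂ)
    (F : Matrix (Fin L) (Fin N) ℂ) (C : Matrix (Fin N) (Fin N) ℂ)
    (hFC : Hᴴ = F * C) (hF : Fᴴ * F = 1) (hC : IsUnit C.det)
    (Fhat : Matrix (Fin L) (Fin N) ℂ) (hFhat : Fhatᴴ * Fhat = 1)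
    (U : Matrix (Fin N) (Fin d) ℂ) (hU : Uᴴ * U = 1)
    (V : Matrix (Fin L) (Fin m) ℂ) (hV : Vᴴ * V = 1)
    (hIA : Uᴴ * Fhatᴴ * V = 0)
    (G : Matrix (Fin N) (Fin d) ℂ) (hG : G = C⁻¹ * Fᴴ * Fhat * U)
    (QI : Matrix (Fin d) (Fin d) ℂ) (hQI : QI = Gᴴ * H * V * Vᴴ * Hᴴ * G)
    (hq : chordalDistSq Fhat F ≤ Δ ^ 2)
    (QS : Matrix (Fin d) (Fin d) ℂ) (hQS : QS.PosSemidef) :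
    Real.log ‖(1 + ((P / d : ℝ) : ℂ) • QS).det‖
        - (Real.log ‖(1 + ((P / d : ℝ) : ℂ) • (QS + QI)).det‖
            - Real.log ‖(1 + ((P / d : ℝ) : ℂ) • QI).det‖)
      ≤ d * Real.log (1 + 8 / (c ^ (2 / (N_G : ℝ)) * d)) := by
  have hd' : (0:ℝ) < d := Nat.cast_pos.mpr hd
  have hP0 : (0:ℝ) < P := lt_trans one_pos hP
  set a : ℝ := P / d with ha_def
  have ha : 0 < a := div_pos hP0 hd'
  set K : ℝ := 8 / (c ^ (2 / (N_G : ℝ)) * d) with hK_def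
  have hcpow : (0:ℝ) < c ^ (2/(N_G:ℝ)) := Real.rpow_pos_of_pos hc _
  have hK : 0 < K := div_pos (by norm_num) (mul_pos hcpow hd')
  have hNG' : (0:ℝ) < N_G := Nat.cast_pos.mpr hNG
  have h2NF : (0:ℝ) < (2:ℝ) ^ N_f := Real.rpow_pos_of_pos (by norm_num) _
  have hbase : (0:ℝ) < c * 2 ^ N_f := mul_pos hc h2NF
  have hΔsq : Δ ^ 2 = 4 / (c ^ (2/(N_G:ℝ)) * P) := by
    rw [hΔ, div_pow]
    have e1 : (((c * 2 ^ N_f) ^ (1/(N_G:ℝ))) : ℝ) ^ (2:ℕ)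
        = c ^ (2/(N_G:ℝ)) * P := by
      rw [← Real.rpow_natCast ((c * 2 ^ N_f) ^ (1/(N_G:ℝ))) 2, ← Real.rpow_mul hbase.le]
      rw [show (1/(N_G:ℝ)) * ((2:ℕ):ℝ) = 2/(N_G:ℝ) by push_cast; ring]
      rw [Real.mul_rpow hc.le h2NF.le]
      congr 1
      rw [← Real.rpow_mul (by norm_num : (0:ℝ) ≤ 2), hNf]
      rw [show ((N_G:ℝ)/2) * Real.logb 2 P * (2/(N_G:ℝ)) = Real.logb 2 P by
        field_simp]
      exact Real.rpow_logb (by norm_num) (by norm_num) hP0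
    rw [e1]
    norm_num
  have hKey : a * (2 * Δ^2) = K := by
    rw [hΔsq, hK_def, ha_def]
    field_simp
    ring
  -- matrix algebra
  set A := Vᴴ * Hᴴ * G with hA_def
  have hQIA : QI = Aᴴ * A := by
    rw [hQI, hA_def]
    simp only [conjTranspose_mul, conjTranspose_conjTranspose, Matrix.mul_assoc]
  have hQIpsd : QI.PosSemidef := by
    rw [hQIA]; exact posSemidef_conjTranspose_mul_self A
  have hFU : (Fhat * U)ᴴ * (Fhat * U) = 1 := by
    rw [conjTranspose_mul, Matrix.mul_assoc, ← Matrix.mul_assoc Fhatᴴ Fhat U, hFhat,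
      Matrix.one_mul, hU]
  have hVFU : Vᴴ * (Fhat * U) = 0 := by
    have h := congrArg conjTranspose hIA
    simp only [conjTranspose_mul, conjTranspose_conjTranspose, conjTranspose_zero,
      Matrix.mul_assoc] at h
    exact h
  have hHG : Hᴴ * G = F * (Fᴴ * (Fhat * U)) := by
    rw [hG, hFC]
    simp only [Matrix.mul_assoc]
    rw [← Matrix.mul_assoc C C⁻¹ _, mul_nonsing_inv C hC, Matrix.one_mul]
  set D2 := F * Fᴴ - Fhat * Fhatᴴ with hD2_def
  have hAeq : A = Vᴴ * (D2 * (Fhat * U)) := by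
    have e1 : D2 * (Fhat * U) = F * (Fᴴ * (Fhat * U)) - Fhat * U := by
      rw [hD2_def, Matrix.sub_mul, Matrix.mul_assoc F Fᴴ _, Matrix.mul_assoc Fhat Fhatᴴ _,
        ← Matrix.mul_assoc Fhatᴴ Fhat U, hFhat, Matrix.one_mul]
    rw [e1, Matrix.mul_sub, hVFU, sub_zero, hA_def, Matrix.mul_assoc, hHG]
  have hfrobA : frobNormSq A ≤ 2 * Δ^2 := by
    have h1 : frobNormSq A ≤ frobNormSq (D2 * (Fhat * U)) := by
      rw [hAeq]; exact frobNormSq_mul_left_le V _ hV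
    have h2 : frobNormSq (D2 * (Fhat * U)) ≤ frobNormSq D2 :=
      frobNormSq_mul_right_le _ _ hFU
    have h3 : frobNormSq D2 = 2 * chordalDistSq Fhat F := by
      rw [hD2_def, show F * Fᴴ - Fhat * Fhatᴴ = -(Fhat * Fhatᴴ - F * Fᴴ) from (neg_sub _ _).symm,
        frobNormSq_neg]
      simp only [chordalDistSq]
      ring
    have := hq
    simp only [chordalDistSq] at this h3
    linarith
  -- eigenvalues of QI
  have htr : QI.trace = (frobNormSq A : ℂ) := by
    rw [hQIA]; exact trace_conjTranspose_mul_self A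
  have hsum : ∑ i, hQIpsd.1.eigenvalues i = frobNormSq A := by
    have h := trace_eq_sum_eigenvalues' hQIpsd.1
    rw [htr] at h
    exact_mod_cast h.symm
  have hlamnn : ∀ i, 0 ≤ hQIpsd.1.eigenvalues i := hQIpsd.eigenvalues_nonneg
  have hlamle : ∀ i, a * hQIpsd.1.eigenvalues i ≤ K := by
    intro i
    have h1 : hQIpsd.1.eigenvalues i ≤ frobNormSq A :=
      Finset.single_le_sum (fun j _ => hlamnn j) (Finset.mem_univ i) |>.trans_eq hsum
    calc a * hQIpsd.1.eigenvalues i ≤ a * (2 * Δ^2) := by nlinarith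
      _ = K := hKey
  -- det of 1 + a•QI
  have hdetQI : ‖(1 + ((a:ℝ):ℂ) • QI).det‖
      = ∏ i, (1 + a * hQIpsd.1.eigenvalues i) := by
    rw [det_one_add_real_smul a hQIpsd.1, Complex.norm_real, Real.norm_eq_abs, abs_of_nonneg]
    exact Finset.prod_nonneg fun i _ => by nlinarith [hlamnn i, ha.le]
  have hlogQI : Real.log (‖(1 + ((a:ℝ):ℂ) • QI).det‖)
      ≤ d * Real.log (1 + K) := by
    rw [hdetQI]
    have hprodpos : 0 < ∏ i, (1 + a * hQIpsd.1.eigenvalues i) :=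
      Finset.prod_pos fun i _ =>
        add_pos_of_pos_of_nonneg one_pos (mul_nonneg ha.le (hlamnn i))
    have hle : ∏ i, (1 + a * hQIpsd.1.eigenvalues i) ≤ (1 + K) ^ d := by
      calc ∏ i, (1 + a * hQIpsd.1.eigenvalues i)
          ≤ ∏ _i : Fin d, (1 + K) :=
            Finset.prod_le_prod
              (fun i _ => add_nonneg one_pos.le (mul_nonneg ha.le (hlamnn i)))
              (fun i _ => by linarith [hlamle i])
        _ = (1 + K) ^ d := by rw [Finset.prod_const, Finset.card_univ, Fintype.card_fin]
    calc Real.log (∏ i, (1 + a * hQIpsd.1.eigenvalues i))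
        ≤ Real.log ((1 + K) ^ d) := Real.log_le_log hprodpos hle
      _ = d * Real.log (1 + K) := by rw [Real.log_pow]
  -- monotonicity part
  have haQS : (((a:ℝ):ℂ) • QS).PosSemidef := posSemidef_real_smul hQS ha.le
  have haQI : (((a:ℝ):ℂ) • QI).PosSemidef := posSemidef_real_smul hQIpsd ha.le
  set W := 1 + ((a:ℝ):ℂ) • QS with hW_def
  have hWpd : W.PosDef := Matrix.PosDef.one.add_posSemidef haQS
  obtain ⟨R, hRps, hRR⟩ := exists_psd_sqrt hWpd.posSemidef
  have hdetW : W.det ≠ 0 := hWpd.det_pos.ne'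
  have hdetR : R.det ≠ 0 := by
    intro h; exact hdetW (by rw [← hRR, det_mul, h, mul_zero])
  have hRunit : IsUnit R.det := isUnit_iff_ne_zero.mpr hdetR
  have hRinv : R * R⁻¹ = 1 := mul_nonsing_inv R hRunit
  have hRinv' : R⁻¹ * R = 1 := nonsing_inv_mul R hRunit
  have hRinvH : R⁻¹ᴴ = R⁻¹ := by rw [conjTranspose_nonsing_inv, hRps.1.eq]
  set T := R⁻¹ * (((a:ℝ):ℂ) • QI) * R⁻¹ with hT_def
  have hTps : T.PosSemidef := by
    have h := haQI.mul_mul_conjTranspose_same R⁻¹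
    rwa [hRinvH] at h
  have hiden : 1 + ((a:ℝ):ℂ) • (QS + QI) = R * (1 + T) * R := by
    rw [smul_add, ← add_assoc, ← hW_def, Matrix.mul_add, Matrix.mul_one, Matrix.add_mul, hRR]
    congr 1
    rw [hT_def]
    have e : R * (R⁻¹ * (((a:ℝ):ℂ) • QI) * R⁻¹) * R
        = (R * R⁻¹) * (((a:ℝ):ℂ) • QI) * (R⁻¹ * R) := by
      simp only [Matrix.mul_assoc]
    rw [e, hRinv, hRinv', Matrix.one_mul, Matrix.mul_one]
  have habs1 : ‖(1 + ((a:ℝ):ℂ) • (QS + QI)).det‖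
      = ‖W.det‖ * ‖(1 + T).det‖ := by
    rw [hiden, det_mul, det_mul, norm_mul, norm_mul]
    have e : ‖R.det‖ * ‖R.det‖ = ‖W.det‖ := by
      rw [← norm_mul, ← det_mul, hRR]
    calc ‖R.det‖ * ‖(1 + T).det‖ * ‖R.det‖
        = ‖R.det‖ * ‖R.det‖ * ‖(1 + T).det‖ := by ring
      _ = ‖W.det‖ * ‖(1 + T).det‖ := by rw [e]
  have habsT : 1 ≤ ‖(1 + T).det‖ := by
    have h1 : (1 : Matrix (Fin d) (Fin d) ℂ) + T = 1 + ((1:ℝ):ℂ) • T := by norm_num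
    rw [h1, det_one_add_real_smul 1 hTps.1, Complex.norm_real, Real.norm_eq_abs]
    have h2 : 1 ≤ ∏ i, (1 + 1 * hTps.1.eigenvalues i) := by
      calc (1:ℝ) = ∏ _i : Fin d, (1:ℝ) := by rw [Finset.prod_const_one]
        _ ≤ ∏ i, (1 + 1 * hTps.1.eigenvalues i) :=
          Finset.prod_le_prod (fun i _ => by norm_num)
            (fun i _ => by nlinarith [hTps.eigenvalues_nonneg i])
    rw [abs_of_nonneg (by linarith)]
    exact h2
  have habsW : ‖W.det‖ ≠ 0 := by
    simpa using hdetW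
  have habsTne : ‖(1 + T).det‖ ≠ 0 := by linarith
  rw [habs1, Real.log_mul habsW habsTne]
  have hTlog : 0 ≤ Real.log (‖(1 + T).det‖) := Real.log_nonneg habsT
  linarith [hlogQI, hTlog]
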